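/- In the high-transfer-price setting with τ₁ > 0 and γ ∈ (0,1) strictly less than 1, the derivative of the optimal transfer price with respect to the harmed country's tax rate, P'(t) = [γ·(p^∨−p̄)/((1−exp(−λ))·(1+z)·(1+1/γ))^γ] · (t−(t−τ₁))/(t^(1+γ)·(t−τ₁)^(1−γ)), tends to +∞ as t → τ₁ from the right (i.e. as the tax differential tends to zero, the variation of the optimal price diverges in the profit-shifting direction). -/

import Mathlib

open Real Set Filter Topology

/-- In the high-transfer-price setting with `τ₁ > 0` and `γ ∈ (0,1)`, the derivative of
the optimal transfer price with respect to the harmed country's tax rate,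
`P'(t) = [γ·(p^∨−p̄)/((1−exp(−λ))·(1+z)·(1+1/γ))^γ]·(t−(t−τ₁))/(t^(1+γ)·(t−τ₁)^(1−γ))`,
tends to `+∞` as `t → τ₁⁺`. -/
theorem stmt11 (τ₁ lam z γ pbar pvee : ℝ)
    (hτ₁ : τ₁ ∈ Set.Ioo (0 : ℝ) 1)
    (hlam : 0 < lam) (hz : 0 < z) (hγ : γ ∈ Set.Ioo (0 : ℝ) 1) (hp : pbar < pvee)
    (P : ℝ → ℝ)
    (hP : P = fun t => pbar +
      ((t - τ₁) / ((1 - Real.exp (-lam)) * (1 + z) * t * (1 + 1 / γ))) ^ γ * (pvee - pbar))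
    (D : ℝ → ℝ)
    (hD : D = fun t => γ * (pvee - pbar) /
        ((1 - Real.exp (-lam)) * (1 + z) * (1 + 1 / γ)) ^ γ *
      ((t - (t - τ₁)) / (t ^ (1 + γ) * (t - τ₁) ^ (1 - γ)))) :
    (∀ t ∈ Set.Ioc τ₁ 1, HasDerivAt P (D t) t) ∧
    Filter.Tendsto D (nhdsWithin τ₁ (Set.Ioi τ₁)) Filter.atTop := by
  obtain ⟨hτ₁0, hτ₁1⟩ := hτ₁
  obtain ⟨hγ0, hγ1⟩ := hγ
  have hE : (0:ℝ) < 1 - Real.exp (-lam) := by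
    have : Real.exp (-lam) < 1 := Real.exp_lt_one_iff.mpr (by linarith)
    linarith
  set A : ℝ := (1 - Real.exp (-lam)) * (1 + z) with hAdef
  have hA : 0 < A := by positivity
  set B : ℝ := 1 + 1 / γ with hBdef
  have hB : 0 < B := by positivity
  constructor
  · intro t ht
    obtain ⟨ht1, _⟩ := ht
    have ht0 : 0 < t := lt_trans hτ₁0 ht1
    have hx : 0 < t - τ₁ := by linarith
    have hden : 0 < A * t * B := by positivity
    have h1 : HasDerivAt (fun s : ℝ => s - τ₁) 1 t := (hasDerivAt_id t).sub_const τ₁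
    have h2 : HasDerivAt (fun s : ℝ => A * s * B) (A * B) t := by
      simpa using ((hasDerivAt_id t).const_mul A).mul_const B
    have h3 := h1.div h2 (ne_of_gt hden)
    have hne : (t - τ₁) / (A * t * B) ≠ 0 := by positivity
    have h4 := ((h3.rpow_const (p := γ) (Or.inl hne)).mul_const (pvee - pbar)).const_add pbar
    rw [hP, hD]
    refine h4.congr_deriv ?_
    have hpow : ((t - τ₁) / (A * t * B)) ^ (γ - 1)
        = ((t - τ₁) ^ γ / (t - τ₁)) / ((A * B) ^ γ * t ^ γ / (A * t * B)) := by
      rw [Real.div_rpow hx.le hden.le, Real.rpow_sub hx, Real.rpow_sub hden,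
        Real.rpow_one, Real.rpow_one]
      congr 2
      rw [show A * t * B = (A * B) * t by ring, Real.mul_rpow (by positivity) ht0.le]
    have hxpow : (t - τ₁) ^ (1 - γ) = (t - τ₁) / (t - τ₁) ^ γ := by
      rw [Real.rpow_sub hx, Real.rpow_one]
    have htpow : t ^ (1 + γ) = t * t ^ γ := by
      rw [Real.rpow_add ht0, Real.rpow_one]
    simp only [Pi.div_apply]
    rw [hpow, hxpow, htpow]
    have hxγ : (0:ℝ) < (t - τ₁) ^ γ := Real.rpow_pos_of_pos hx γ
    have htγ : (0:ℝ) < t ^ γ := Real.rpow_pos_of_pos ht0 γ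
    have hABγ : (0:ℝ) < (A * B) ^ γ := Real.rpow_pos_of_pos (by positivity) γ
    field_simp
  · -- limit part
    rw [hD]
    set K : ℝ := γ * (pvee - pbar) / (A * B) ^ γ with hKdef
    have hK : 0 < K := by
      have : (0:ℝ) < (A * B) ^ γ := Real.rpow_pos_of_pos (by positivity) γ
      have : 0 < γ * (pvee - pbar) := by nlinarith
      positivity
    have hg : Filter.Tendsto (fun t : ℝ => t ^ (1 + γ) * (t - τ₁) ^ (1 - γ))
        (nhdsWithin τ₁ (Set.Ioi τ₁)) (nhdsWithin 0 (Set.Ioi 0)) := by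
      apply tendsto_nhdsWithin_of_tendsto_nhds_of_eventually_within
      · have h1 : Filter.Tendsto (fun t : ℝ => t ^ (1 + γ)) (nhds τ₁) (nhds (τ₁ ^ (1 + γ))) :=
          (Real.continuousAt_rpow_const τ₁ (1 + γ) (Or.inl (ne_of_gt hτ₁0)))
        have h2 : Filter.Tendsto (fun t : ℝ => (t - τ₁) ^ (1 - γ)) (nhds τ₁) (nhds 0) := by
          have hc : ContinuousAt (fun x : ℝ => x ^ (1 - γ)) 0 :=
            Real.continuousAt_rpow_const 0 (1 - γ) (Or.inr (by linarith))
          have : Filter.Tendsto (fun t : ℝ => t - τ₁) (nhds τ₁) (nhds 0) := by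
            have := Filter.Tendsto.sub_const (tendsto_id (α := ℝ) (x := nhds τ₁)) τ₁
            simpa using this
          have := hc.tendsto.comp this
          simpa [Function.comp_def, Real.zero_rpow (by linarith : 1 - γ ≠ 0)] using this
        have hmul : Filter.Tendsto (fun t : ℝ => t ^ (1 + γ) * (t - τ₁) ^ (1 - γ))
            (nhdsWithin τ₁ (Set.Ioi τ₁)) (nhds (τ₁ ^ (1 + γ) * 0)) :=
          (h1.mono_left nhdsWithin_le_nhds).mul (h2.mono_left nhdsWithin_le_nhds)
        simpa using hmul
      · filter_upwards [self_mem_nhdsWithin] with t ht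
        have ht1 : τ₁ < t := ht
        have ht0 : 0 < t := lt_trans hτ₁0 ht1
        have hx : 0 < t - τ₁ := by linarith
        exact mul_pos (Real.rpow_pos_of_pos ht0 _) (Real.rpow_pos_of_pos hx _)
    have hτpos : Filter.Tendsto
        (fun t : ℝ => (t - (t - τ₁)) / (t ^ (1 + γ) * (t - τ₁) ^ (1 - γ)))
        (nhdsWithin τ₁ (Set.Ioi τ₁)) Filter.atTop := by
      have hinv := hg.inv_tendsto_nhdsGT_zero
      have := hinv.const_mul_atTop hτ₁0
      refine this.congr (fun t => ?_)
      simp [div_eq_mul_inv]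
    exact hτpos.const_mul_atTop hK
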